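/- Let κ₁, κ₂ > 0 and μ₁, μ₂ ≥ 0 satisfy κ₁μ₂ + κ₂μ₁ < (κ₁+κ₂)/2. Then there exists r > 0 such that, with K = diag(√κ₁, √κ₁, √κ₂, √κ₂) and M = diag(μ₁, μ₁, μ₂, μ₂), the complex Hermitian matrix Λ(K·V(r)·Kᵀ + M)Λ − (i/2)Δ is not positive semidefinite. (This is the covariance-matrix form of the necessity direction of Corollary 3: if κ₁μ₂ + κ₂μ₁ < (κ₁+κ₂)/2, the channel Φ(κ₁,μ₁)⊗Φ(κ₂,μ₂) does not annihilate the entanglement of all two-mode gaussian states.) -/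

import Mathlib

open Matrix ComplexOrder

/-- Covariance matrix of the two-mode squeezed vacuum with squeezing parameter `r`. -/
noncomputable def Vtms (r : ℝ) : Matrix (Fin 4) (Fin 4) ℝ :=
  (1/2 : ℝ) • !![Real.cosh (2*r), 0, Real.sinh (2*r), 0;
                 0, Real.cosh (2*r), 0, -Real.sinh (2*r);
                 Real.sinh (2*r), 0, Real.cosh (2*r), 0;
                 0, -Real.sinh (2*r), 0, Real.cosh (2*r)]

/-- The 4×4 symplectic form, block diagonal with blocks [[0,-1],[1,0]]. -/
def Δ4 : Matrix (Fin 4) (Fin 4) ℝ :=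
  !![0,-1,0,0; 1,0,0,0; 0,0,0,-1; 0,0,1,0]

/-- Partial transposition of the second mode on covariance matrices. -/
def Λ4 : Matrix (Fin 4) (Fin 4) ℝ :=
  !![1,0,0,0; 0,1,0,0; 0,0,1,0; 0,0,0,-1]

/-- The complex Hermitian matrix `V - (i/2)Δ` built from a real 4×4 matrix `V`. -/
noncomputable def simonMatrix (V : Matrix (Fin 4) (Fin 4) ℝ) : Matrix (Fin 4) (Fin 4) ℂ :=
  V.map (fun x => (x : ℂ)) - (Complex.I / 2) • Δ4.map (fun x => (x : ℂ))

private lemma quadform_re (κ₁ κ₂ μ₁ μ₂ r X Y : ℝ) :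
    (star (![(X:ℂ), Complex.I*X, -Y, -Complex.I*Y]) ⬝ᵥ
      (simonMatrix (Λ4 *
          (Matrix.diagonal ![Real.sqrt κ₁, Real.sqrt κ₁, Real.sqrt κ₂, Real.sqrt κ₂] * Vtms r *
              (Matrix.diagonal ![Real.sqrt κ₁, Real.sqrt κ₁, Real.sqrt κ₂, Real.sqrt κ₂])ᵀ +
            Matrix.diagonal ![μ₁, μ₁, μ₂, μ₂]) * Λ4)).mulVec
        (![(X:ℂ), Complex.I*X, -Y, -Complex.I*Y])).re
    = (Real.sqrt κ₁)^2 * Real.cosh (2*r) * X^2 + (Real.sqrt κ₂)^2 * Real.cosh (2*r) * Y^2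
      + 2*μ₁*X^2 + 2*μ₂*Y^2 - X^2 - Y^2
      - 2 * (Real.sqrt κ₁ * Real.sqrt κ₂ * Real.sinh (2*r)) * X * Y := by
  simp [simonMatrix, Vtms, Δ4, Λ4, Matrix.mulVec, dotProduct, Fin.sum_univ_four,
    Matrix.mul_apply, Matrix.diagonal, Matrix.sub_apply, Matrix.map_apply, Matrix.add_apply,
    Matrix.smul_apply, Matrix.transpose_apply, Complex.add_re, Complex.mul_re, Complex.I_re,
    Complex.I_im, Complex.ofReal_re, Complex.ofReal_im, Complex.sub_re, Complex.neg_re,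
    Complex.neg_im, Complex.add_im, Complex.mul_im, Complex.conj_re, Complex.conj_im,
    Complex.div_re, Complex.div_im, Complex.normSq, Matrix.vecMul, Matrix.vecHead,
    Matrix.vecTail, Matrix.of_apply, Matrix.cons_val_zero, Matrix.cons_val_one,
    Matrix.head_cons, Matrix.cons_val_fin_one, Matrix.cons_val_succ,
    Complex.cosh_ofReal_re, Complex.sinh_ofReal_re]
  rw [show (2 * (r:ℂ)) = ((2 * r : ℝ) : ℂ) by push_cast; ring]
  simp only [Complex.cosh_ofReal_re, Complex.sinh_ofReal_re]
  ring

private lemma quad_alg (k1 k2 m1 m2 a b c s : ℝ) (ha : a^2 = k1) (hb : b^2 = k2) :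
    a^2*c*(a*b*s)^2 + b^2*c*(k1*c + 2*m1 - 1)^2
      + 2*m1*(a*b*s)^2 + 2*m2*(k1*c + 2*m1 - 1)^2 - (a*b*s)^2 - (k1*c + 2*m1 - 1)^2
      - 2 * (a*b*s) * (a*b*s) * (k1*c + 2*m1 - 1)
    = (k1*c + 2*m1 - 1) * ((k1*c + 2*m1 - 1)*(k2*c + 2*m2 - 1) - k1*k2*s^2) := by
  subst ha hb; ring

theorem asymmetric_channel_not_annihilating (κ₁ κ₂ μ₁ μ₂ : ℝ) (hκ₁ : 0 < κ₁) (hκ₂ : 0 < κ₂)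
    (hμ₁ : 0 ≤ μ₁) (hμ₂ : 0 ≤ μ₂) (h : κ₁ * μ₂ + κ₂ * μ₁ < (κ₁ + κ₂) / 2) :
    ∃ r : ℝ, 0 < r ∧
      ¬ (simonMatrix (Λ4 *
          (Matrix.diagonal ![Real.sqrt κ₁, Real.sqrt κ₁, Real.sqrt κ₂, Real.sqrt κ₂] * Vtms r *
              (Matrix.diagonal ![Real.sqrt κ₁, Real.sqrt κ₁, Real.sqrt κ₂, Real.sqrt κ₂])ᵀ +
            Matrix.diagonal ![μ₁, μ₁, μ₂, μ₂]) * Λ4)).PosSemidef := by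
  have hε : 0 < (κ₁ + κ₂) - 2*(κ₁*μ₂ + κ₂*μ₁) := by linarith
  set ε := (κ₁ + κ₂) - 2*(κ₁*μ₂ + κ₂*μ₁) with hεdef
  set C := (2*μ₁-1)*(2*μ₂-1) + κ₁*κ₂ with hCdef
  set T := max (C/ε) ((1-2*μ₁)/κ₁) with hTdef
  refine ⟨max T 1, lt_of_lt_of_le one_pos (le_max_right T 1), fun hPSD => ?_⟩
  set r := max T 1 with hrdef
  have hr1 : (1:ℝ) ≤ r := le_max_right T 1
  have hr0 : (0:ℝ) < r := lt_of_lt_of_le one_pos hr1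
  -- cosh (2r) > T
  have hsinh : 2*r < Real.sinh (2*r) := Real.self_lt_sinh_iff.mpr (by linarith)
  have hcls : Real.sinh (2*r) < Real.cosh (2*r) := by
    have := Real.cosh_sub_sinh (2*r)
    have := Real.exp_pos (-(2*r))
    linarith
  have hcT : T < Real.cosh (2*r) := by
    have : T ≤ r := le_max_left T 1
    linarith
  -- consequences
  have hεc : C < ε * Real.cosh (2*r) := by
    have h1 : C/ε < Real.cosh (2*r) := lt_of_le_of_lt (le_max_left _ _) hcT
    have := (div_lt_iff₀ hε).mp h1
    linarith
  have hα : 0 < κ₁ * Real.cosh (2*r) + 2*μ₁ - 1 := by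
    have h1 : (1-2*μ₁)/κ₁ < Real.cosh (2*r) :=
      lt_of_le_of_lt (le_max_right (C/ε) _) hcT
    have := (div_lt_iff₀ hκ₁).mp h1
    linarith
  have hpyth := Real.cosh_sq_sub_sinh_sq (2*r)
  have hDneg : (κ₁ * Real.cosh (2*r) + 2*μ₁ - 1) * (κ₂ * Real.cosh (2*r) + 2*μ₂ - 1)
      - κ₁*κ₂*(Real.sinh (2*r))^2 < 0 := by
    have hs2 : (Real.sinh (2*r))^2 = (Real.cosh (2*r))^2 - 1 := by nlinarith [hpyth]
    rw [hs2]
    nlinarith [hεc]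
  -- apply PSD to the witness vector
  set X : ℝ := Real.sqrt κ₁ * Real.sqrt κ₂ * Real.sinh (2*r) with hXdef
  set Y : ℝ := κ₁ * Real.cosh (2*r) + 2*μ₁ - 1 with hYdef
  have h2 := (posSemidef_iff_dotProduct_mulVec.mp hPSD).2 (![(X:ℂ), Complex.I*X, -Y, -Complex.I*Y])
  rw [Complex.le_def] at h2
  have h2re := h2.1
  rw [Complex.zero_re, quadform_re κ₁ κ₂ μ₁ μ₂ r X Y] at h2re
  rw [hXdef, hYdef] at h2re
  rw [quad_alg κ₁ κ₂ μ₁ μ₂ (Real.sqrt κ₁) (Real.sqrt κ₂) (Real.cosh (2*r)) (Real.sinh (2*r))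
      (Real.sq_sqrt hκ₁.le) (Real.sq_sqrt hκ₂.le)] at h2re
  exact absurd h2re (not_le.2 (mul_neg_of_pos_of_neg hα hDneg))
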